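/- Suppose the points x_1,…,x_n are not all contained in a single line in ℝ^p and that the spatial median t(F_n) satisfies t(F_n) ≠ x_ℓ for all ℓ = 1,…,n. Then for every i, j, the spatial median of the perturbed sample satisfies (1/ε){t(F_{n,i,j,ε}) − t(F_n)} → h_{ij} as ε → 0, where h_{ij} = G^{-1} A_i e_j, with y_ℓ := x_ℓ − t(F_n), A_ℓ := ‖y_ℓ‖^{-1} (I_p − y_ℓ y_ℓ'/‖y_ℓ‖²), and G := Σ_{ℓ=1}^n A_ℓ (which is invertible under the stated assumptions). -/

import Mathlib

open Filter

noncomputable section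
variable {F : Type*} [NormedAddCommGroup F] [InnerProductSpace ℝ F]

local notation "⟪" x ", " y "⟫" => @inner ℝ _ _ x y

/-- normalized vector -/
def nz (w : F) : F := ‖w‖⁻¹ • w

/-- derivative of `nz` -/
def Sder (w : F) : F →L[ℝ] F :=
  ‖w‖⁻¹ • (ContinuousLinearMap.id ℝ F - (‖w‖ ^ 2)⁻¹ • ((innerSL ℝ w).smulRight w))

lemma Sder_apply (w v : F) :
    Sder w v = ‖w‖⁻¹ • (v - (‖w‖ ^ 2)⁻¹ • (⟪w, v⟫ • w)) := by
  simp [Sder]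

lemma Sder_neg (w : F) : Sder (-w) = Sder w := by
  ext v
  simp only [Sder_apply, norm_neg, inner_neg_left, neg_smul, smul_neg, neg_neg]

lemma hasFDerivAt_norm' {w : F} (hw : w ≠ 0) :
    HasFDerivAt (fun v : F => ‖v‖) (‖w‖⁻¹ • innerSL ℝ w) w := by
  have h1 : HasFDerivAt (fun v : F => ‖v‖ ^ 2) (2 • innerSL ℝ w) w :=
    (hasStrictFDerivAt_norm_sq w).hasFDerivAt
  have h2 : HasDerivAt Real.sqrt (1 / (2 * Real.sqrt (‖w‖ ^ 2))) (‖w‖ ^ 2) :=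
    Real.hasDerivAt_sqrt (pow_ne_zero 2 (norm_ne_zero_iff.2 hw))
  have h3 := h2.comp_hasFDerivAt w h1
  simp only [Function.comp_def] at h3
  have h4 : (fun v : F => Real.sqrt (‖v‖ ^ 2)) = fun v : F => ‖v‖ := by
    funext v; rw [Real.sqrt_sq (norm_nonneg v)]
  rw [h4] at h3
  refine h3.congr_fderiv ?_
  rw [Real.sqrt_sq (norm_nonneg w)]
  ext v
  have : ‖w‖ ≠ 0 := norm_ne_zero_iff.2 hw
  simp [ContinuousLinearMap.smul_apply, smul_smul]
  field_simp

lemma hasFDerivAt_nz {w : F} (hw : w ≠ 0) : HasFDerivAt (nz (F := F)) (Sder w) w := by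
  have hn : ‖w‖ ≠ 0 := norm_ne_zero_iff.2 hw
  have h1 : HasFDerivAt (fun v : F => ‖v‖⁻¹)
      ((-(‖w‖ ^ 2)⁻¹ : ℝ) • (‖w‖⁻¹ • innerSL ℝ w)) w := by
    have hi : HasDerivAt (fun t : ℝ => t⁻¹) (-(‖w‖ ^ 2)⁻¹) ‖w‖ := by
      simpa [sq] using hasDerivAt_inv hn
    simpa [Function.comp_def] using hi.comp_hasFDerivAt w (hasFDerivAt_norm' hw)
  have h2 := h1.smul (hasFDerivAt_id w)
  refine h2.congr_fderiv (Eq.symm ?_)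
  ext v
  simp only [Sder_apply, ContinuousLinearMap.add_apply, ContinuousLinearMap.smul_apply,
    ContinuousLinearMap.coe_id', id_eq, ContinuousLinearMap.smulRight_apply,
    ContinuousLinearMap.neg_apply, innerSL_apply_apply, smul_sub, smul_smul, neg_smul]
  rw [sub_eq_add_neg]
  match_scalars <;> simp only [smul_eq_mul] <;> ring

lemma contDiffAt_nz {w : F} (hw : w ≠ 0) : ContDiffAt ℝ 1 (nz (F := F)) w := by
  have hn : ‖w‖ ≠ 0 := norm_ne_zero_iff.2 hw
  exact ((contDiffAt_norm ℝ hw).inv hn).smul contDiffAt_id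


open Filter Set Topology in
section
variable {n : ℕ}


lemma convexOn_sumdist (a : Fin n → F) :
    ConvexOn ℝ Set.univ (fun s : F => ∑ ℓ, ‖a ℓ - s‖) := by
  refine ⟨convex_univ, fun w _ v _ c d hc hd hcd => ?_⟩
  have key : ∀ ℓ : Fin n, ‖a ℓ - (c • w + d • v)‖ ≤ c * ‖a ℓ - w‖ + d * ‖a ℓ - v‖ := by
    intro ℓ
    have hid : a ℓ - (c • w + d • v) = c • (a ℓ - w) + d • (a ℓ - v) := by
      match_scalars <;> linarith
    rw [hid]
    calc ‖c • (a ℓ - w) + d • (a ℓ - v)‖ ≤ ‖c • (a ℓ - w)‖ + ‖d • (a ℓ - v)‖ := norm_add_le _ _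
    _ = c * ‖a ℓ - w‖ + d * ‖a ℓ - v‖ := by
        rw [norm_smul, norm_smul, Real.norm_eq_abs, Real.norm_eq_abs, abs_of_nonneg hc,
          abs_of_nonneg hd]
  calc (∑ ℓ, ‖a ℓ - (c • w + d • v)‖) ≤ ∑ ℓ, (c * ‖a ℓ - w‖ + d * ‖a ℓ - v‖) :=
        Finset.sum_le_sum fun ℓ _ => key ℓ
  _ = c • (∑ ℓ, ‖a ℓ - w‖) + d • (∑ ℓ, ‖a ℓ - v‖) := by
      rw [Finset.sum_add_distrib, ← Finset.mul_sum, ← Finset.mul_sum]; simp [smul_eq_mul]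

lemma isMin_of_fderiv_zero {f : F → ℝ} (hf : ConvexOn ℝ Set.univ f) {t : F}
    (hd : HasFDerivAt f (0 : F →L[ℝ] ℝ) t) (s : F) : f t ≤ f s := by
  by_contra hlt
  push_neg at hlt
  set d := s - t with hdd
  have hγ : HasDerivAt (fun c : ℝ => t + c • d) d 0 := by
    simpa using ((hasDerivAt_id (0 : ℝ)).smul_const d).const_add t
  have hc : HasDerivAt (fun c : ℝ => f (t + c • d)) 0 0 := by
    have h0 : t + (0 : ℝ) • d = t := by simp
    have := (h0 ▸ hd).comp_hasDerivAt (0 : ℝ) hγ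
    exact this
  have hslope := (hasDerivAt_iff_tendsto_slope.1 hc).mono_left
    (nhdsWithin_mono _ fun x (hx : x ∈ Ioi (0:ℝ)) => ne_of_gt hx)
  have hub : ∀ᶠ c in 𝓝[>] (0 : ℝ), slope (fun c : ℝ => f (t + c • d)) 0 c ≤ f s - f t := by
    filter_upwards [Ioo_mem_nhdsGT_of_mem (Set.mem_Ico.2 ⟨le_refl (0:ℝ), one_pos⟩)] with c hc'
    obtain ⟨hc0, hc1⟩ := hc'
    have hmem : t + c • d = (1 - c) • t + c • s := by rw [hdd]; module
    have hcv := hf.2 (Set.mem_univ t) (Set.mem_univ s) (by linarith : (0:ℝ) ≤ 1 - c) hc0.le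
      (by ring)
    rw [← hmem] at hcv
    rw [slope_def_field]
    simp only [smul_eq_mul] at hcv
    have h0 : t + (0:ℝ) • d = t := by simp
    rw [h0, sub_zero, div_le_iff₀ hc0]
    nlinarith
  have := le_of_tendsto hslope hub
  linarith

lemma hasFDerivAt_sumdist (a : Fin n → F) {t : F} (hne : ∀ ℓ, a ℓ ≠ t) :
    HasFDerivAt (fun s : F => ∑ ℓ, ‖a ℓ - s‖)
      (∑ ℓ, (‖a ℓ - t‖⁻¹ • innerSL ℝ (a ℓ - t)).comp
        ((0 : F →L[ℝ] F) - ContinuousLinearMap.id ℝ F)) t := by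
  apply HasFDerivAt.fun_sum
  intro ℓ _
  have hsub : HasFDerivAt (fun s : F => a ℓ - s)
      ((0 : F →L[ℝ] F) - ContinuousLinearMap.id ℝ F) t :=
    (hasFDerivAt_const (a ℓ) t).sub (hasFDerivAt_id t)
  exact (hasFDerivAt_norm' (sub_ne_zero.2 (hne ℓ))).comp t hsub

lemma sumdist_deriv_apply (a : Fin n → F) (t : F) (v : F) :
    (∑ ℓ, (‖a ℓ - t‖⁻¹ • innerSL ℝ (a ℓ - t)).comp
        ((0 : F →L[ℝ] F) - ContinuousLinearMap.id ℝ F)) v = ⟪∑ ℓ, nz (t - a ℓ), v⟫ := by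
  rw [sum_inner]
  rw [ContinuousLinearMap.sum_apply]
  refine Finset.sum_congr rfl fun ℓ _ => ?_
  simp only [ContinuousLinearMap.comp_apply, ContinuousLinearMap.sub_apply,
    ContinuousLinearMap.zero_apply, ContinuousLinearMap.coe_id', id_eq, zero_sub,
    ContinuousLinearMap.neg_apply, ContinuousLinearMap.smul_apply, innerSL_apply_apply, nz]
  rw [inner_neg_right, ← neg_sub t (a ℓ), inner_neg_left, norm_neg, neg_neg, smul_eq_mul,
    real_inner_smul_left]

lemma critical_of_isMin (a : Fin n → F) {t : F} (hne : ∀ ℓ, a ℓ ≠ t)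
    (hmin : ∀ s, ∑ ℓ, ‖a ℓ - t‖ ≤ ∑ ℓ, ‖a ℓ - s‖) : ∑ ℓ, nz (t - a ℓ) = 0 := by
  have hloc : IsLocalMin (fun s : F => ∑ ℓ, ‖a ℓ - s‖) t := Filter.Eventually.of_forall hmin
  have hfd := hasFDerivAt_sumdist a hne
  have hzero := hloc.fderiv_eq_zero
  rw [hfd.fderiv] at hzero
  have : ⟪∑ ℓ, nz (t - a ℓ), ∑ ℓ, nz (t - a ℓ)⟫ = 0 := by
    rw [← sumdist_deriv_apply a t, hzero, ContinuousLinearMap.zero_apply]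
  exact inner_self_eq_zero.1 this

lemma isMin_of_critical (a : Fin n → F) {t : F} (hne : ∀ ℓ, a ℓ ≠ t)
    (hcrit : ∑ ℓ, nz (t - a ℓ) = 0) (s : F) : ∑ ℓ, ‖a ℓ - t‖ ≤ ∑ ℓ, ‖a ℓ - s‖ := by
  have hfd := hasFDerivAt_sumdist a hne
  have hL : (∑ ℓ, (‖a ℓ - t‖⁻¹ • innerSL ℝ (a ℓ - t)).comp
      ((0 : F →L[ℝ] F) - ContinuousLinearMap.id ℝ F)) = (0 : F →L[ℝ] ℝ) := by
    ext v
    rw [sumdist_deriv_apply a t, hcrit, inner_zero_left, ContinuousLinearMap.zero_apply]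
  rw [hL] at hfd
  exact isMin_of_fderiv_zero (convexOn_sumdist a) hfd s

lemma collinear_of_two_min (a : Fin n → F) {s t : F}
    (hs : ∀ w, ∑ ℓ, ‖a ℓ - s‖ ≤ ∑ ℓ, ‖a ℓ - w‖)
    (ht : ∀ w, ∑ ℓ, ‖a ℓ - t‖ ≤ ∑ ℓ, ‖a ℓ - w‖)
    (hst : s ≠ t) : ∀ ℓ, ∃ c : ℝ, a ℓ = s + c • (t - s) := by
  set m : F := (2:ℝ)⁻¹ • (s + t) with hm
  have hvals : ∑ ℓ, ‖a ℓ - t‖ = ∑ ℓ, ‖a ℓ - s‖ := le_antisymm (ht s) (hs t)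
  have hterm : ∀ ℓ : Fin n,
      ‖a ℓ - m‖ ≤ ‖(2:ℝ)⁻¹ • (a ℓ - s)‖ + ‖(2:ℝ)⁻¹ • (a ℓ - t)‖ := by
    intro ℓ
    have hid : a ℓ - m = (2:ℝ)⁻¹ • (a ℓ - s) + (2:ℝ)⁻¹ • (a ℓ - t) := by
      rw [hm]; module
    rw [hid]; exact norm_add_le _ _
  have hsum : ∑ ℓ, (‖(2:ℝ)⁻¹ • (a ℓ - s)‖ + ‖(2:ℝ)⁻¹ • (a ℓ - t)‖) = ∑ ℓ, ‖a ℓ - s‖ := by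
    rw [Finset.sum_add_distrib]
    simp only [norm_smul]
    rw [← Finset.mul_sum, ← Finset.mul_sum, ← hvals]
    rw [Real.norm_eq_abs, abs_of_nonneg (by norm_num : (0:ℝ) ≤ (2:ℝ)⁻¹)]
    ring
  have heq : ∀ ℓ : Fin n, ‖a ℓ - m‖ = ‖(2:ℝ)⁻¹ • (a ℓ - s)‖ + ‖(2:ℝ)⁻¹ • (a ℓ - t)‖ := by
    by_contra hcon
    push_neg at hcon
    obtain ⟨ℓ₀, hℓ₀⟩ := hcon
    have hstrict : ∑ ℓ, ‖a ℓ - m‖ < ∑ ℓ, (‖(2:ℝ)⁻¹ • (a ℓ - s)‖ + ‖(2:ℝ)⁻¹ • (a ℓ - t)‖) :=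
      Finset.sum_lt_sum (fun ℓ _ => hterm ℓ) ⟨ℓ₀, Finset.mem_univ _, lt_of_le_of_ne (hterm ℓ₀) hℓ₀⟩
    rw [hsum] at hstrict
    exact absurd (hs m) (not_le.2 hstrict)
  intro ℓ
  have hray : SameRay ℝ ((2:ℝ)⁻¹ • (a ℓ - s)) ((2:ℝ)⁻¹ • (a ℓ - t)) := by
    apply sameRay_iff_norm_add.2
    rw [← heq ℓ]
    congr 1
    rw [hm]; module
  by_cases hzs : a ℓ = s
  · exact ⟨0, by rw [hzs]; simp⟩
  by_cases hzt : a ℓ = t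
  · exact ⟨1, by rw [hzt]; module⟩
  obtain ⟨r₁, r₂, hr₁, hr₂, hr⟩ := hray.exists_pos
    (by simp [sub_eq_zero, hzs]) (by simp [sub_eq_zero, hzt])
  · by_cases hr12 : r₁ = r₂
    · exfalso
      rw [hr12] at hr
      have := smul_right_injective F (ne_of_gt hr₂) hr
      have h2 := smul_right_injective F (by norm_num : (2:ℝ)⁻¹ ≠ 0) this
      exact hst (sub_right_inj.1 h2)
    · refine ⟨-r₂ / (r₁ - r₂), ?_⟩
      have hd : r₁ - r₂ ≠ 0 := sub_ne_zero.2 hr12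
      have hr' : r₁ • (a ℓ - s) = r₂ • (a ℓ - t) := by
        rw [smul_smul, smul_smul] at hr
        have h2 : ((2:ℝ)⁻¹ * r₁) • (a ℓ - s) = ((2:ℝ)⁻¹ * r₂) • (a ℓ - t) := by
          rw [mul_comm ((2:ℝ)⁻¹) r₁, mul_comm ((2:ℝ)⁻¹) r₂]; exact hr
        rw [mul_smul, mul_smul] at h2
        exact smul_right_injective F (by norm_num : (2:ℝ)⁻¹ ≠ 0) h2
      -- (r₁ - r₂) • a ℓ = r₁ • s - r₂ • t
      have hkey : (r₁ - r₂) • a ℓ = r₁ • s - r₂ • t := by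
        rw [sub_smul]
        rw [smul_sub, smul_sub] at hr'
        rw [sub_eq_sub_iff_add_eq_add] at hr' ⊢
        rw [hr']
        abel
      have : a ℓ = (r₁ - r₂)⁻¹ • ((r₁ - r₂) • a ℓ) := by
        rw [smul_smul, inv_mul_cancel₀ hd, one_smul]
      rw [hkey] at this
      rw [this]
      match_scalars <;> field_simp <;> ring
end

end
section collinear
open Filter Set Topology
variable {F : Type*} [NormedAddCommGroup F] [NormedSpace ℝ F] {n : ℕ}

lemma mem_line {a v b₁ b₂ w : F} {c₁ c₂ c₃ : ℝ} (h1 : b₁ = a + c₁ • v) (h2 : b₂ = a + c₂ • v)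
    (h3 : w = a + c₃ • v) (hne : b₁ ≠ b₂) : ∃ t : ℝ, w = b₁ + t • (b₂ - b₁) := by
  have hc : c₂ - c₁ ≠ 0 := by
    intro h
    apply hne
    have : c₂ = c₁ := by linarith [sub_eq_zero.1 h]
    rw [h1, h2, this]
  refine ⟨(c₃ - c₁) / (c₂ - c₁), ?_⟩
  rw [h1, h2, h3]
  match_scalars
  · ring
  · field_simp; ring

lemma eventually_not_collinear (x : Fin n → F) (i : Fin n) (u : F)
    (hline : ¬ ∃ a v : F, ∀ ℓ, ∃ c : ℝ, x ℓ = a + c • v) :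
    ∀ᶠ ε in 𝓝[≠] (0:ℝ), ¬ ∃ a v : F, ∀ ℓ, ∃ c : ℝ,
      (if ℓ = i then x i + ε • u else x ℓ) = a + c • v := by
  set z : ℝ → Fin n → F := fun ε ℓ => if ℓ = i then x i + ε • u else x ℓ with hzdef
  show ∀ᶠ ε in 𝓝[≠] (0:ℝ), ¬ ∃ a v : F, ∀ ℓ, ∃ c : ℝ, z ε ℓ = a + c • v
  have hz0 : ∀ ℓ, z 0 ℓ = x ℓ := by
    intro ℓ; by_cases h : ℓ = i <;> simp [hzdef, h]
  have hzi : ∀ ε, z ε i = x i + ε • u := by intro ε; simp [hzdef]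
  have hznot : ∀ ε ℓ, ℓ ≠ i → z ε ℓ = x ℓ := by intro ε ℓ h; simp [hzdef, h]
  have hbad0 : ¬ ∃ a v : F, ∀ ℓ, ∃ c : ℝ, z 0 ℓ = a + c • v := by
    rintro ⟨a, v, h⟩
    exact hline ⟨a, v, fun ℓ => by rw [← hz0 ℓ]; exact h ℓ⟩
  by_cases hsep : ∃ ℓ₁ ℓ₂, ℓ₁ ≠ i ∧ ℓ₂ ≠ i ∧ x ℓ₁ ≠ x ℓ₂
  · obtain ⟨ℓ₁, ℓ₂, h1i, h2i, h12⟩ := hsep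
    have claim : ∀ ε₁ ε₂ : ℝ, ε₁ ≠ ε₂ →
        (∃ a v : F, ∀ ℓ, ∃ c : ℝ, z ε₁ ℓ = a + c • v) →
        (∃ a v : F, ∀ ℓ, ∃ c : ℝ, z ε₂ ℓ = a + c • v) → False := by
      rintro ε₁ ε₂ hne ⟨a₁, v₁, hB1⟩ ⟨a₂, v₂, hB2⟩
      set d : F := x ℓ₂ - x ℓ₁ with hd
      have hmem : ∀ (ε : ℝ) (a v : F), (∀ ℓ, ∃ c : ℝ, z ε ℓ = a + c • v) →
          ∀ ℓ, ∃ t : ℝ, z ε ℓ = x ℓ₁ + t • d := by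
        intro ε a v hB ℓ
        obtain ⟨c₁, hc₁⟩ := hB ℓ₁
        obtain ⟨c₂, hc₂⟩ := hB ℓ₂
        obtain ⟨c₃, hc₃⟩ := hB ℓ
        rw [hznot ε ℓ₁ h1i] at hc₁
        rw [hznot ε ℓ₂ h2i] at hc₂
        exact mem_line hc₁ hc₂ hc₃ h12
      obtain ⟨t₁, ht₁⟩ := hmem ε₁ a₁ v₁ hB1 i
      obtain ⟨t₂, ht₂⟩ := hmem ε₂ a₂ v₂ hB2 i
      rw [hzi] at ht₁ ht₂
      have hεne : ε₁ - ε₂ ≠ 0 := sub_ne_zero.2 hne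
      have hu : (ε₁ - ε₂) • u = (t₁ - t₂) • d := by
        calc (ε₁ - ε₂) • u = (x i + ε₁ • u) - (x i + ε₂ • u) := by module
        _ = (x ℓ₁ + t₁ • d) - (x ℓ₁ + t₂ • d) := by rw [ht₁, ht₂]
        _ = (t₁ - t₂) • d := by module
      set r : ℝ := (ε₁ - ε₂)⁻¹ * (t₁ - t₂) with hrdef
      have hu' : u = r • d := by
        calc u = (ε₁ - ε₂)⁻¹ • ((ε₁ - ε₂) • u) := by
              rw [smul_smul, inv_mul_cancel₀ hεne, one_smul]
        _ = (ε₁ - ε₂)⁻¹ • ((t₁ - t₂) • d) := by rw [hu]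
        _ = r • d := by rw [smul_smul]
      have hxi : x i = x ℓ₁ + (t₁ - ε₁ * r) • d := by
        calc x i = (x i + ε₁ • u) - ε₁ • u := by module
        _ = (x ℓ₁ + t₁ • d) - ε₁ • (r • d) := by rw [ht₁, hu']
        _ = x ℓ₁ + (t₁ - ε₁ * r) • d := by module
      apply hbad0
      refine ⟨x ℓ₁, d, fun ℓ => ?_⟩
      by_cases h : ℓ = i
      · subst h
        exact ⟨t₁ - ε₁ * r, by rw [hz0, hxi]⟩
      · obtain ⟨t, ht⟩ := hmem ε₁ a₁ v₁ hB1 ℓ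
        rw [hznot ε₁ ℓ h] at ht
        exact ⟨t, by rw [hz0 ℓ, ht]⟩
    by_cases hB : ∃ ε₀ : ℝ, ∃ a v : F, ∀ ℓ, ∃ c : ℝ, z ε₀ ℓ = a + c • v
    · obtain ⟨ε₀, hε₀⟩ := hB
      have hε₀0 : (0:ℝ) ≠ ε₀ := by
        intro h
        exact hbad0 (h ▸ hε₀)
      filter_upwards [eventually_ne_nhdsWithin hε₀0] with ε hε hbad
      exact claim ε ε₀ hε hbad hε₀
    · exact Filter.Eventually.of_forall fun ε hbad => hB ⟨ε, hbad⟩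
  · exfalso
    push_neg at hsep
    by_cases hex : ∃ ℓ₀, ℓ₀ ≠ i
    · obtain ⟨ℓ₀, hℓ₀⟩ := hex
      refine hline ⟨x i, x ℓ₀ - x i, fun ℓ => ?_⟩
      by_cases h : ℓ = i
      · exact ⟨0, by rw [h]; simp⟩
      · exact ⟨1, by rw [hsep ℓ ℓ₀ h hℓ₀]; module⟩
    · push_neg at hex
      exact hline ⟨x i, 0, fun ℓ => ⟨0, by rw [hex ℓ]; simp⟩⟩

end collinear
section posdef
open Filter Topology
variable {F : Type*} [NormedAddCommGroup F] [InnerProductSpace ℝ F]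
local notation "⟪" x ", " y "⟫" => @inner ℝ _ _ x y

lemma inner_Sder_expand (w v : F) :
    ⟪v, Sder w v⟫ = ‖w‖⁻¹ * (‖v‖ ^ 2 - (‖w‖ ^ 2)⁻¹ * (⟪w, v⟫ * ⟪w, v⟫)) := by
  rw [Sder_apply, real_inner_smul_right, inner_sub_right, real_inner_smul_right,
    real_inner_smul_right, real_inner_self_eq_norm_sq, real_inner_comm v w]
  try ring

lemma inner_Sder_nonneg (w v : F) (hw : w ≠ 0) : 0 ≤ ⟪v, Sder w v⟫ := by
  rw [inner_Sder_expand]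
  have h1 : (0:ℝ) < ‖w‖ := norm_pos_iff.2 hw
  have h2 := real_inner_mul_inner_self_le w v
  rw [real_inner_self_eq_norm_sq, real_inner_self_eq_norm_sq] at h2
  have h3 : (0:ℝ) < ‖w‖ ^ 2 := by positivity
  have h4 : (‖w‖ ^ 2)⁻¹ * (⟪w, v⟫ * ⟪w, v⟫) ≤ ‖v‖ ^ 2 := by
    rw [inv_mul_le_iff₀ h3]
    nlinarith
  have h5 : (0:ℝ) ≤ ‖w‖⁻¹ := by positivity
  nlinarith

lemma inner_Sder_pos (w v : F) (hw : w ≠ 0) (hv : v ≠ 0)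
    (hnp : ∀ c : ℝ, w ≠ c • v) : 0 < ⟪v, Sder w v⟫ := by
  rw [inner_Sder_expand]
  have h1 : (0:ℝ) < ‖w‖ := norm_pos_iff.2 hw
  have hv1 : (0:ℝ) < ‖v‖ := norm_pos_iff.2 hv
  have h3 : (0:ℝ) < ‖w‖ ^ 2 := by positivity
  have hCS : ⟪w, v⟫ * ⟪w, v⟫ < ‖w‖ ^ 2 * ‖v‖ ^ 2 := by
    have hup : ⟪w, v⟫ < ‖w‖ * ‖v‖ := by
      rw [inner_lt_norm_mul_iff_real]
      intro hcon
      refine hnp (‖v‖⁻¹ * ‖w‖) ?_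
      have h := congrArg (fun z => ‖v‖⁻¹ • z) hcon
      simp only [smul_smul] at h
      rw [inv_mul_cancel₀ (ne_of_gt hv1), one_smul] at h
      exact h
    have hlo : ⟪-w, v⟫ < ‖-w‖ * ‖v‖ := by
      rw [inner_lt_norm_mul_iff_real]
      intro hcon
      rw [norm_neg] at hcon
      refine hnp (-(‖v‖⁻¹ * ‖w‖)) ?_
      have h0 : ‖v‖ • w = -(‖w‖ • v) := by
        have h' : ‖v‖ • -w = ‖w‖ • v := hcon
        rw [smul_neg] at h'
        rw [← h', neg_neg]
      have h := congrArg (fun z => ‖v‖⁻¹ • z) h0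
      simp only [smul_smul, smul_neg] at h
      rw [inv_mul_cancel₀ (ne_of_gt hv1), one_smul] at h
      rw [neg_smul]
      exact h
    rw [inner_neg_left, norm_neg] at hlo
    have := neg_lt_of_neg_lt hlo
    nlinarith
  have key : (‖w‖ ^ 2)⁻¹ * (⟪w, v⟫ * ⟪w, v⟫) < ‖v‖ ^ 2 := by
    rw [inv_mul_lt_iff₀ h3]
    nlinarith
  have : (0:ℝ) < ‖w‖⁻¹ := by positivity
  nlinarith

end posdef
open Matrix Filter Topology in
/-- The perturbed sample `F_{n,i,j,ε}`, in which `x i` is replaced by `x i + ε • e j`. -/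
noncomputable def eperturb (n p : ℕ) (x : Fin n → EuclideanSpace ℝ (Fin p))
    (i : Fin n) (j : Fin p) (ε : ℝ) : Fin n → EuclideanSpace ℝ (Fin p) :=
  Function.update x i (x i + ε • EuclideanSpace.single j (1 : ℝ))

set_option maxHeartbeats 2000000 in
open Matrix Filter Topology in
theorem stmt_7 (n p : ℕ) (x : Fin n → EuclideanSpace ℝ (Fin p))
    (hline : ¬ ∃ (a v : EuclideanSpace ℝ (Fin p)), ∀ ℓ, ∃ c : ℝ, x ℓ = a + c • v)
    (t₀ : EuclideanSpace ℝ (Fin p))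
    (ht₀ : ∀ t : EuclideanSpace ℝ (Fin p), ∑ ℓ, ‖x ℓ - t₀‖ ≤ ∑ ℓ, ‖x ℓ - t‖)
    (hne : ∀ ℓ, t₀ ≠ x ℓ)
    (i : Fin n) (j : Fin p)
    (tm : ℝ → EuclideanSpace ℝ (Fin p))
    (htm : ∀ ε : ℝ, ∀ t : EuclideanSpace ℝ (Fin p),
      ∑ ℓ, ‖eperturb n p x i j ε ℓ - tm ε‖ ≤ ∑ ℓ, ‖eperturb n p x i j ε ℓ - t‖)
    (y : Fin n → EuclideanSpace ℝ (Fin p)) (hy : ∀ ℓ, y ℓ = x ℓ - t₀)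
    (A : Fin n → Matrix (Fin p) (Fin p) ℝ)
    (hA : ∀ ℓ, A ℓ = ‖y ℓ‖⁻¹ • ((1 : Matrix (Fin p) (Fin p) ℝ)
      - (‖y ℓ‖ ^ 2)⁻¹ • Matrix.vecMulVec (fun r => y ℓ r) (fun r => y ℓ r)))
    (G : Matrix (Fin p) (Fin p) ℝ) (hG : G = ∑ ℓ, A ℓ) :
    Tendsto (fun ε : ℝ => ε⁻¹ • (tm ε - t₀)) (nhdsWithin 0 {0}ᶜ)
      (nhds ((WithLp.equiv 2 (Fin p → ℝ)).symm
        ((G⁻¹ * A i).mulVec (Pi.single j 1 : Fin p → ℝ)))) := by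
  classical
  -- basic setup
  have hy0 : ∀ ℓ, y ℓ ≠ 0 := fun ℓ => by rw [hy]; exact sub_ne_zero.2 (Ne.symm (hne ℓ))
  set u : EuclideanSpace ℝ (Fin p) := EuclideanSpace.single j (1:ℝ) with hu
  set δf : Fin n → ℝ := fun ℓ => if ℓ = i then 1 else 0 with hδf
  set zf : Fin n → ℝ → EuclideanSpace ℝ (Fin p) := fun ℓ ε => x ℓ + ε • (δf ℓ • u) with hzf
  have hzf_eq : ∀ (ε : ℝ) ℓ, zf ℓ ε = if ℓ = i then x i + ε • u else x ℓ := by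
    intro ε ℓ
    by_cases h : ℓ = i <;> simp [hzf, hδf, h]
  have hzf0 : ∀ ℓ, zf ℓ 0 = x ℓ := by intro ℓ; simp [hzf]
  have heq_pert : ∀ (ε : ℝ) ℓ, eperturb n p x i j ε ℓ = zf ℓ ε := by
    intro ε ℓ
    rw [hzf_eq]
    by_cases h : ℓ = i <;> simp [eperturb, Function.update_apply, h, hu]
  -- the operator 𝒢
  set 𝒢 : EuclideanSpace ℝ (Fin p) →L[ℝ] EuclideanSpace ℝ (Fin p) := ∑ ℓ, Sder (y ℓ) with h𝒢
  have hpos : ∀ v : EuclideanSpace ℝ (Fin p), v ≠ 0 → (0:ℝ) < inner ℝ v (𝒢 v) := by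
    intro v hv
    have hex : ∃ ℓ₀, ∀ c : ℝ, y ℓ₀ ≠ c • v := by
      by_contra hcon
      push_neg at hcon
      refine hline ⟨t₀, v, fun ℓ => ?_⟩
      obtain ⟨c, hc⟩ := hcon ℓ
      exact ⟨c, by rw [← hc, hy]; abel⟩
    obtain ⟨ℓ₀, hℓ₀⟩ := hex
    have : (inner ℝ v (𝒢 v) : ℝ) = ∑ ℓ, (inner ℝ v (Sder (y ℓ) v) : ℝ) := by
      rw [h𝒢, ContinuousLinearMap.sum_apply, inner_sum]
    rw [this]
    exact Finset.sum_pos' (fun ℓ _ => inner_Sder_nonneg _ _ (hy0 ℓ))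
      ⟨ℓ₀, Finset.mem_univ _, inner_Sder_pos _ _ (hy0 ℓ₀) hv hℓ₀⟩
  have hinj : Function.Injective 𝒢 := by
    intro a b hab
    by_contra hcon
    have hsub : a - b ≠ 0 := sub_ne_zero.2 hcon
    have h0 : 𝒢 (a - b) = 0 := by rw [map_sub, hab, sub_self]
    have h1 := hpos (a - b) hsub
    rw [h0, inner_zero_right] at h1
    exact lt_irrefl 0 h1
  have hsurj : Function.Surjective 𝒢 := by
    exact (LinearMap.injective_iff_surjective
      (f := (𝒢 : EuclideanSpace ℝ (Fin p) →ₗ[ℝ] EuclideanSpace ℝ (Fin p)))).1 hinj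
  set 𝒢e : EuclideanSpace ℝ (Fin p) ≃L[ℝ] EuclideanSpace ℝ (Fin p) :=
    (LinearEquiv.ofBijective
      (𝒢 : EuclideanSpace ℝ (Fin p) →ₗ[ℝ] EuclideanSpace ℝ (Fin p))
      ⟨hinj, hsurj⟩).toContinuousLinearEquiv with h𝒢e
  have h𝒢e_coe : ∀ v : EuclideanSpace ℝ (Fin p), 𝒢e v = 𝒢 v := by
    intro v
    rw [h𝒢e]
    rw [LinearEquiv.coe_toContinuousLinearEquiv']
    rfl
  -- coordinates
  have hsum_apply : ∀ (f : Fin n → EuclideanSpace ℝ (Fin p)) (r : Fin p), (∑ ℓ, f ℓ) r = ∑ ℓ, f ℓ r := by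
    intro f r
    induction (Finset.univ : Finset (Fin n)) using Finset.cons_induction with
    | empty => rfl
    | cons a s ha ih => rw [Finset.sum_cons, Finset.sum_cons, ← ih]; rfl
  have hinner : ∀ w v : EuclideanSpace ℝ (Fin p), (inner ℝ w v : ℝ) = ∑ s, w s * v s := by
    intro w v
    simp [PiLp.inner_apply, RCLike.inner_apply, conj_trivial, mul_comm]
  have hAact : ∀ ℓ (v : EuclideanSpace ℝ (Fin p)) (r : Fin p), (A ℓ).mulVec (fun s => v s) r = Sder (y ℓ) v r := by
    intro ℓ v r
    rw [hA ℓ, Matrix.smul_mulVec, Matrix.sub_mulVec, Matrix.one_mulVec,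
      Matrix.smul_mulVec]
    have hvmv : (Matrix.vecMulVec (fun r => y ℓ r) (fun r => y ℓ r)).mulVec (fun s => v s)
        = fun r' => (∑ s, y ℓ s * v s) * y ℓ r' := by
      funext r'
      simp only [Matrix.mulVec, dotProduct, Matrix.vecMulVec_apply]
      rw [Finset.sum_mul]
      exact Finset.sum_congr rfl fun s _ => by ring
    rw [hvmv, Sder_apply]
    simp only [Pi.smul_apply, Pi.sub_apply, PiLp.smul_apply, PiLp.sub_apply, smul_eq_mul]
    try rw [hinner]
    try ring
  have hGact : ∀ (v : EuclideanSpace ℝ (Fin p)) (r : Fin p), G.mulVec (fun s => v s) r = 𝒢 v r := by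
    intro v r
    rw [hG]
    have hs : (∑ ℓ, A ℓ).mulVec (fun s => v s) r = ∑ ℓ, (A ℓ).mulVec (fun s => v s) r := by
      simp only [Matrix.mulVec, dotProduct, Matrix.sum_apply, Finset.sum_mul]
      rw [Finset.sum_comm]
    rw [hs, h𝒢, ContinuousLinearMap.sum_apply, hsum_apply]
    exact Finset.sum_congr rfl fun ℓ _ => hAact ℓ v r
  -- G is invertible
  have hGinj : Function.Injective (G.mulVec : (Fin p → ℝ) → (Fin p → ℝ)) := by
    intro w₁ w₂ hw
    set v₁ : EuclideanSpace ℝ (Fin p) := (WithLp.equiv 2 (Fin p → ℝ)).symm w₁ with hv₁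
    set v₂ : EuclideanSpace ℝ (Fin p) := (WithLp.equiv 2 (Fin p → ℝ)).symm w₂ with hv₂
    have hv : 𝒢 v₁ = 𝒢 v₂ := by
      ext r
      rw [← hGact v₁ r, ← hGact v₂ r]
      show G.mulVec w₁ r = G.mulVec w₂ r
      rw [hw]
    have h12 : v₁ = v₂ := hinj hv
    calc w₁ = (WithLp.equiv 2 (Fin p → ℝ)) v₁ := rfl
    _ = (WithLp.equiv 2 (Fin p → ℝ)) v₂ := by rw [h12]
    _ = w₂ := rfl
  have hGG : G * G⁻¹ = 1 :=
    Matrix.mul_nonsing_inv G ((Matrix.isUnit_iff_isUnit_det G).1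
      (Matrix.mulVec_injective_iff_isUnit.1 hGinj))
  -- target vector
  set h₀ : EuclideanSpace ℝ (Fin p) := (WithLp.equiv 2 (Fin p → ℝ)).symm
      ((G⁻¹ * A i).mulVec (Pi.single j 1 : Fin p → ℝ)) with hh₀
  set w₀ : EuclideanSpace ℝ (Fin p) := Sder (y i) u with hw₀
  have hkey : 𝒢 h₀ = w₀ := by
    have hu_single : (fun s => u s) = (Pi.single j 1 : Fin p → ℝ) := by
      funext s
      simp [hu, EuclideanSpace.single_apply, Pi.single_apply]
    ext r
    rw [← hGact h₀ r]
    show G.mulVec ((G⁻¹ * A i).mulVec (Pi.single j 1 : Fin p → ℝ)) r = w₀ r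
    rw [Matrix.mulVec_mulVec, ← Matrix.mul_assoc, hGG, Matrix.one_mul]
    rw [hw₀, ← hAact i u r, hu_single]
  -- the map F
  set Fm : ℝ × EuclideanSpace ℝ (Fin p) → ℝ × EuclideanSpace ℝ (Fin p) := fun q => (q.1, ∑ ℓ, nz (q.2 - zf ℓ q.1)) with hFm
  -- derivative data for Fm
  have hyneg : ∀ ℓ, t₀ - zf ℓ 0 = -(y ℓ) := by
    intro ℓ; rw [hzf0, hy]; abel
  set Mf : Fin n → (ℝ × EuclideanSpace ℝ (Fin p)) →L[ℝ] EuclideanSpace ℝ (Fin p) :=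
    fun ℓ => ContinuousLinearMap.snd ℝ ℝ _ -
      (ContinuousLinearMap.fst ℝ ℝ _).smulRight (δf ℓ • u) with hMf
  have hm : ∀ ℓ, HasFDerivAt (fun q : ℝ × EuclideanSpace ℝ (Fin p) => q.2 - zf ℓ q.1)
      (Mf ℓ) (0, t₀) := by
    intro ℓ
    rw [hMf]
    refine HasFDerivAt.sub hasFDerivAt_snd ?_
    have h1 : HasFDerivAt (fun q : ℝ × EuclideanSpace ℝ (Fin p) => q.1 • (δf ℓ • u))
        ((ContinuousLinearMap.fst ℝ ℝ _).smulRight (δf ℓ • u)) (0, t₀) :=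
      (hasFDerivAt_fst).smul_const (δf ℓ • u)
    have h2 := h1.const_add (x ℓ)
    simpa [hzf] using h2
  have hterm : ∀ ℓ, HasFDerivAt (fun q : ℝ × EuclideanSpace ℝ (Fin p) => nz (q.2 - zf ℓ q.1))
      ((Sder (y ℓ)).comp (Mf ℓ)) (0, t₀) := by
    intro ℓ
    have hval : t₀ - zf ℓ 0 ≠ 0 := by
      rw [hyneg ℓ]; exact neg_ne_zero.2 (hy0 ℓ)
    have hnz : HasFDerivAt nz (Sder (t₀ - zf ℓ 0)) (t₀ - zf ℓ 0) := hasFDerivAt_nz hval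
    have hcomp := hnz.comp ((0:ℝ), t₀) (hm ℓ)
    rw [hyneg ℓ, Sder_neg] at hcomp
    simpa [Function.comp_def] using hcomp
  set Dg : (ℝ × EuclideanSpace ℝ (Fin p)) →L[ℝ] EuclideanSpace ℝ (Fin p) :=
    ∑ ℓ, (Sder (y ℓ)).comp (Mf ℓ) with hDg
  have hgd : HasFDerivAt (fun q : ℝ × EuclideanSpace ℝ (Fin p) => ∑ ℓ, nz (q.2 - zf ℓ q.1))
      Dg (0, t₀) := by
    rw [hDg]; exact HasFDerivAt.fun_sum fun ℓ _ => hterm ℓ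
  have hFd : HasFDerivAt Fm ((ContinuousLinearMap.fst ℝ ℝ _).prod Dg) (0, t₀) := by
    rw [hFm]; exact (hasFDerivAt_fst).prodMk hgd
  have hDg_apply : ∀ q : ℝ × EuclideanSpace ℝ (Fin p), Dg q = 𝒢 q.2 - q.1 • w₀ := by
    intro q
    rw [hDg, ContinuousLinearMap.sum_apply]
    have hterm2 : ∀ ℓ : Fin n, ((Sder (y ℓ)).comp (Mf ℓ)) q
        = Sder (y ℓ) q.2 - (if ℓ = i then q.1 • w₀ else 0) := by
      intro ℓ
      rw [hMf]
      simp only [ContinuousLinearMap.comp_apply, ContinuousLinearMap.sub_apply,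
        ContinuousLinearMap.coe_snd', ContinuousLinearMap.smulRight_apply,
        ContinuousLinearMap.coe_fst', map_sub, _root_.map_smul]
      congr 1
      by_cases h : ℓ = i
      · subst h
        simp [hδf, hw₀]
      · simp [hδf, h]
    rw [Finset.sum_congr rfl fun ℓ _ => hterm2 ℓ, Finset.sum_sub_distrib,
      Finset.sum_ite_eq' Finset.univ i fun _ => q.1 • w₀]
    simp [h𝒢, ContinuousLinearMap.sum_apply]
  set Dlin : (ℝ × EuclideanSpace ℝ (Fin p)) ≃ₗ[ℝ] (ℝ × EuclideanSpace ℝ (Fin p)) :=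
    { toFun := fun q => (q.1, 𝒢 q.2 - q.1 • w₀)
      map_add' := by
        intro a b
        refine Prod.ext rfl ?_
        show 𝒢 (a.2 + b.2) - (a.1 + b.1) • w₀ = (𝒢 a.2 - a.1 • w₀) + (𝒢 b.2 - b.1 • w₀)
        rw [map_add, add_smul]; abel
      map_smul' := by
        intro c a
        refine Prod.ext rfl ?_
        show 𝒢 (c • a.2) - (c * a.1) • w₀ = c • (𝒢 a.2 - a.1 • w₀)
        rw [_root_.map_smul, smul_sub, smul_smul]
      invFun := fun q => (q.1, 𝒢e.symm (q.2 + q.1 • w₀))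
      left_inv := by
        intro q
        refine Prod.ext rfl ?_
        show 𝒢e.symm ((𝒢 q.2 - q.1 • w₀) + q.1 • w₀) = q.2
        rw [sub_add_cancel, ← h𝒢e_coe, ContinuousLinearEquiv.symm_apply_apply]
      right_inv := by
        intro q
        refine Prod.ext rfl ?_
        show 𝒢 (𝒢e.symm (q.2 + q.1 • w₀)) - q.1 • w₀ = q.2
        rw [← h𝒢e_coe, ContinuousLinearEquiv.apply_symm_apply]
        abel } with hDlin
  set Deq : (ℝ × EuclideanSpace ℝ (Fin p)) ≃L[ℝ] (ℝ × EuclideanSpace ℝ (Fin p)) :=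
    Dlin.toContinuousLinearEquiv with hDeq
  have hDeq_coe : ∀ q : ℝ × EuclideanSpace ℝ (Fin p), Deq q = (q.1, 𝒢 q.2 - q.1 • w₀) := by
    intro q
    rw [hDeq]
    rw [show (⇑(Dlin.toContinuousLinearEquiv) : ℝ × EuclideanSpace ℝ (Fin p) → _)
      = ⇑Dlin from LinearEquiv.coe_toContinuousLinearEquiv' Dlin]
    rfl
  have hDeq_symm : ∀ q : ℝ × EuclideanSpace ℝ (Fin p),
      Deq.symm q = (q.1, 𝒢e.symm (q.2 + q.1 • w₀)) := by
    intro q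
    rw [hDeq]
    rw [show (⇑(Dlin.toContinuousLinearEquiv).symm : ℝ × EuclideanSpace ℝ (Fin p) → _)
      = ⇑Dlin.symm from LinearEquiv.coe_toContinuousLinearEquiv_symm' Dlin]
    rfl
  have hFdeq : HasFDerivAt Fm
      ((Deq : (ℝ × EuclideanSpace ℝ (Fin p)) →L[ℝ] (ℝ × EuclideanSpace ℝ (Fin p)))) (0, t₀) := by
    have hcoe : ((ContinuousLinearMap.fst ℝ ℝ (EuclideanSpace ℝ (Fin p))).prod Dg)
        = (Deq : (ℝ × EuclideanSpace ℝ (Fin p)) →L[ℝ] (ℝ × EuclideanSpace ℝ (Fin p))) := by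
      apply ContinuousLinearMap.ext
      intro q
      have h1 : ((ContinuousLinearMap.fst ℝ ℝ (EuclideanSpace ℝ (Fin p))).prod Dg) q
          = (q.1, Dg q) := rfl
      rw [h1, hDg_apply q]
      exact (hDeq_coe q).symm
    rw [← hcoe]
    exact hFd
  have hCD : ContDiffAt ℝ 1 Fm (0, t₀) := by
    rw [hFm]
    refine ContDiffAt.prodMk contDiffAt_fst ?_
    refine ContDiffAt.sum fun ℓ _ => ?_
    have hmc : ContDiffAt ℝ 1 (fun q : ℝ × EuclideanSpace ℝ (Fin p) => q.2 - zf ℓ q.1)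
        (0, t₀) := by
      refine ContDiffAt.sub contDiffAt_snd ?_
      have : ContDiffAt ℝ 1
          (fun q : ℝ × EuclideanSpace ℝ (Fin p) => x ℓ + q.1 • (δf ℓ • u)) (0, t₀) :=
        (contDiffAt_const).add ((contDiffAt_fst).smul contDiffAt_const)
      simpa [hzf] using this
    have hval : t₀ - zf ℓ 0 ≠ 0 := by
      rw [hyneg ℓ]; exact neg_ne_zero.2 (hy0 ℓ)
    have h2 : ContDiffAt ℝ 1 (nz ∘ fun q : ℝ × EuclideanSpace ℝ (Fin p) => q.2 - zf ℓ q.1)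
        (0, t₀) := ContDiffAt.comp (0, t₀) (contDiffAt_nz hval) hmc
    simpa [Function.comp_def] using h2
  have hstrict : HasStrictFDerivAt Fm
      ((Deq : (ℝ × EuclideanSpace ℝ (Fin p)) →L[ℝ] (ℝ × EuclideanSpace ℝ (Fin p)))) (0, t₀) :=
    hCD.hasStrictFDerivAt' hFdeq one_ne_zero
  have hcrit0 : ∑ ℓ, nz (t₀ - x ℓ) = 0 :=
    critical_of_isMin x (fun ℓ => (hne ℓ).symm) ht₀
  have hFa : Fm (0, t₀) = (0, 0) := by
    rw [hFm]
    refine Prod.ext rfl ?_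
    show (∑ ℓ, nz (t₀ - zf ℓ 0)) = 0
    rw [Finset.sum_congr rfl fun ℓ _ => by rw [hzf0 ℓ]]
    exact hcrit0
  set inv := hstrict.localInverse Fm Deq (0, t₀) with hinvdef
  set φ : ℝ → EuclideanSpace ℝ (Fin p) := fun ε => (inv (ε, 0)).2 with hφ
  have hpair : Tendsto (fun ε : ℝ => (ε, (0 : EuclideanSpace ℝ (Fin p)))) (𝓝 0)
      (𝓝 (Fm (0, t₀))) := by
    rw [hFa]
    exact (continuous_id.prodMk continuous_const).tendsto 0
  have hφ0 : φ 0 = t₀ := by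
    have h1 : inv (0, 0) = (0, t₀) := by
      rw [← hFa, hinvdef]
      exact hstrict.localInverse_apply_image
    show (inv ((0:ℝ), (0 : EuclideanSpace ℝ (Fin p)))).2 = t₀
    rw [h1]
  have hinv_fd : HasStrictFDerivAt inv
      ((Deq.symm : (ℝ × EuclideanSpace ℝ (Fin p)) →L[ℝ] (ℝ × EuclideanSpace ℝ (Fin p))))
      (0, 0) := by
    rw [← hFa, hinvdef]
    exact hstrict.to_localInverse
  have hline_fd : HasFDerivAt (fun ε : ℝ => (ε, (0 : EuclideanSpace ℝ (Fin p))))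
      ((ContinuousLinearMap.id ℝ ℝ).prod 0) 0 := (hasFDerivAt_id (0:ℝ)).prodMk (hasFDerivAt_const 0 0)
  have hφpair : HasFDerivAt (fun ε : ℝ => inv (ε, 0))
      ((Deq.symm : (ℝ × EuclideanSpace ℝ (Fin p)) →L[ℝ] _).comp
        ((ContinuousLinearMap.id ℝ ℝ).prod 0)) 0 := by
    have h1 := HasFDerivAt.comp (𝕜 := ℝ)
      (f := fun ε : ℝ => (ε, (0 : EuclideanSpace ℝ (Fin p)))) (g := inv) (0:ℝ)
      (hinv_fd.hasFDerivAt) hline_fd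
    simpa [Function.comp_def] using h1
  have hφ_fd : HasFDerivAt φ
      ((ContinuousLinearMap.snd ℝ ℝ (EuclideanSpace ℝ (Fin p))).comp
        (((Deq.symm : (ℝ × EuclideanSpace ℝ (Fin p)) →L[ℝ] _)).comp
          ((ContinuousLinearMap.id ℝ ℝ).prod 0))) 0 := by
    have h1 := ((ContinuousLinearMap.snd ℝ ℝ (EuclideanSpace ℝ (Fin p))).hasFDerivAt).comp 0 hφpair
    simpa [Function.comp_def, hφ] using h1
  have hφd : HasDerivAt φ h₀ 0 := by
    have h1 := hφ_fd.hasDerivAt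
    have h2 : ((ContinuousLinearMap.snd ℝ ℝ (EuclideanSpace ℝ (Fin p))).comp
        (((Deq.symm : (ℝ × EuclideanSpace ℝ (Fin p)) →L[ℝ] _)).comp
          ((ContinuousLinearMap.id ℝ ℝ).prod 0))) 1 = h₀ := by
      simp only [ContinuousLinearMap.comp_apply, ContinuousLinearMap.prod_apply,
        ContinuousLinearMap.coe_id', id_eq, ContinuousLinearMap.zero_apply,
        ContinuousLinearMap.coe_snd', ContinuousLinearMap.coe_coe]
      have h3 : ((Deq.symm : (ℝ × EuclideanSpace ℝ (Fin p)) →L[ℝ] _)) ((1:ℝ),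
          (0 : EuclideanSpace ℝ (Fin p))) = Deq.symm ((1:ℝ), (0 : EuclideanSpace ℝ (Fin p))) := rfl
      rw [h3, hDeq_symm]
      show 𝒢e.symm ((0 : EuclideanSpace ℝ (Fin p)) + (1:ℝ) • w₀) = h₀
      rw [zero_add, one_smul, ← hkey, ← h𝒢e_coe h₀, ContinuousLinearEquiv.symm_apply_apply]
    rw [h2] at h1
    exact h1
  have hev_right : ∀ᶠ ε in 𝓝 (0:ℝ), Fm (inv (ε, 0)) = (ε, 0) := by
    have h1 := hstrict.eventually_right_inverse
    exact hpair.eventually h1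
  have hev_crit : ∀ᶠ ε in 𝓝 (0:ℝ), ∑ ℓ, nz (φ ε - zf ℓ ε) = 0 := by
    filter_upwards [hev_right] with ε hε
    have h1 : (inv (ε, 0)).1 = ε := congrArg Prod.fst hε
    have h2 : (∑ ℓ, nz ((inv (ε, 0)).2 - zf ℓ ((inv (ε, 0)).1))) = 0 := congrArg Prod.snd hε
    rw [h1] at h2
    exact h2
  have hφcont : ContinuousAt φ 0 := by
    have h1 : ContinuousAt inv (0, 0) := by
      rw [← hFa, hinvdef]
      exact hstrict.localInverse_continuousAt
    have h2 : ContinuousAt (fun ε : ℝ => (ε, (0 : EuclideanSpace ℝ (Fin p)))) 0 :=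
      (continuous_id.prodMk continuous_const).continuousAt
    have h3 : ContinuousAt (fun ε : ℝ => inv (ε, 0)) 0 :=
      ContinuousAt.comp (f := fun ε : ℝ => (ε, (0 : EuclideanSpace ℝ (Fin p)))) h1 h2
    exact h3.snd
  have hev_ne : ∀ᶠ ε in 𝓝 (0:ℝ), ∀ ℓ, zf ℓ ε ≠ φ ε := by
    rw [eventually_all]
    intro ℓ
    have hzc : Continuous (fun ε : ℝ => zf ℓ ε) := by
      have : Continuous (fun ε : ℝ => x ℓ + ε • (δf ℓ • u)) :=
        continuous_const.add (continuous_id.smul continuous_const)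
      simpa [hzf] using this
    have hc : ContinuousAt (fun ε => φ ε - zf ℓ ε) 0 := hφcont.sub hzc.continuousAt
    have hval : φ 0 - zf ℓ 0 ≠ 0 := by
      rw [hφ0, hyneg ℓ]
      exact neg_ne_zero.2 (hy0 ℓ)
    filter_upwards [hc.eventually_ne hval] with ε hε hcon
    exact hε (by rw [hcon, sub_self])
  have hev_min : ∀ᶠ ε in 𝓝 (0:ℝ), ∀ s, ∑ ℓ, ‖zf ℓ ε - φ ε‖ ≤ ∑ ℓ, ‖zf ℓ ε - s‖ := by
    filter_upwards [hev_crit, hev_ne] with ε h1 h2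
    exact isMin_of_critical (fun ℓ => zf ℓ ε) h2 h1
  have hev_nc := eventually_not_collinear x i u hline
  have hev_eq : ∀ᶠ ε in 𝓝[≠] (0:ℝ), tm ε = φ ε := by
    filter_upwards [hev_min.filter_mono nhdsWithin_le_nhds, hev_nc] with ε hmin hnc
    by_contra hcon
    have htm' : ∀ s, ∑ ℓ, ‖zf ℓ ε - tm ε‖ ≤ ∑ ℓ, ‖zf ℓ ε - s‖ := by
      intro s
      have h1 := htm ε s
      simpa only [heq_pert] using h1
    have hcol := collinear_of_two_min (fun ℓ => zf ℓ ε) htm' hmin hcon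
    apply hnc
    refine ⟨tm ε, φ ε - tm ε, fun ℓ => ?_⟩
    obtain ⟨c, hc⟩ := hcol ℓ
    exact ⟨c, by rw [← hzf_eq]; exact hc⟩
  have hslope := hasDerivAt_iff_tendsto_slope.1 hφd
  refine hslope.congr' ?_
  filter_upwards [hev_eq, self_mem_nhdsWithin] with ε hεeq (hε0 : ε ∈ ({0}ᶜ : Set ℝ))
  have : slope φ 0 ε = ε⁻¹ • (φ ε - t₀) := by
    rw [slope_def_module]
    rw [hφ0]
    simp
  rw [this, hεeq]
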